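/- arXiv:1603.04043 — 6 statements merged into one kernel-verified Lean document; each statement's English description precedes it below -/
import Mathlib

section
/- Let μ : [0,1]^n → ℝ be a function that is monotone (say, nondecreasing) separately in each of its n variables and continuous separately in each variable. Then μ is jointly continuous on [0,1]^n. -/
open Filter Topology

/-- Key lemma: if `f : X × [0,1] → ℝ` is jointly continuous in the first variable for each
fixed second variable, and continuous and monotone in the second variable for each fixed
first variable, then `f` is jointly continuous. -/
lemma aux_key {X : Type*} [TopologicalSpace X] (f : X → Set.Icc (0:ℝ) 1 → ℝ)
    (h1 : ∀ t, Continuous fun x => f x t)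
    (h2 : ∀ x, Continuous (f x))
    (h3 : ∀ x, Monotone (f x)) :
    Continuous fun p : X × Set.Icc (0:ℝ) 1 => f p.1 p.2 := by
  rw [continuous_iff_continuousAt]
  rintro ⟨x₀, t₀⟩
  rw [ContinuousAt, Metric.tendsto_nhds]
  intro ε hε
  have hε2 : 0 < ε / 2 := by positivity
  have hV : {t | dist (f x₀ t) (f x₀ t₀) < ε / 2} ∈ 𝓝 t₀ :=
    Metric.tendsto_nhds.mp ((h2 x₀).tendsto t₀) (ε / 2) hε2
  obtain ⟨l, u, ht₀, hIcc, hsub⟩ := exists_Icc_mem_subset_of_mem_nhds hV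
  have hl : dist (f x₀ l) (f x₀ t₀) < ε / 2 := hsub ⟨le_refl l, ht₀.1.trans ht₀.2⟩
  have hu : dist (f x₀ u) (f x₀ t₀) < ε / 2 := hsub ⟨ht₀.1.trans ht₀.2, le_refl u⟩
  have hUl : {x | dist (f x l) (f x₀ l) < ε / 2} ∈ 𝓝 x₀ :=
    Metric.tendsto_nhds.mp ((h1 l).tendsto x₀) (ε / 2) hε2
  have hUu : {x | dist (f x u) (f x₀ u) < ε / 2} ∈ 𝓝 x₀ :=
    Metric.tendsto_nhds.mp ((h1 u).tendsto x₀) (ε / 2) hε2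
  have hprod : ({x | dist (f x l) (f x₀ l) < ε / 2} ∩ {x | dist (f x u) (f x₀ u) < ε / 2})
      ×ˢ Set.Icc l u ∈ 𝓝 (x₀, t₀) := prod_mem_nhds (Filter.inter_mem hUl hUu) hIcc
  filter_upwards [hprod]
  rintro ⟨x, t⟩ ⟨⟨hxl, hxu⟩, htl, htu⟩
  have h₁ : f x l ≤ f x t := h3 x htl
  have h₂ : f x t ≤ f x u := h3 x htu
  rw [Real.dist_eq, abs_lt]
  simp only [Set.mem_setOf_eq, Real.dist_eq, abs_lt] at hxl hxu hl hu
  dsimp only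
  constructor <;> nlinarith

theorem main_ind : ∀ (n : ℕ) (μ : (Fin n → Set.Icc (0:ℝ) 1) → ℝ),
    (∀ (j : Fin n) (x : Fin n → Set.Icc (0:ℝ) 1),
      Monotone (fun y => μ (Function.update x j y))) →
    (∀ (j : Fin n) (x : Fin n → Set.Icc (0:ℝ) 1),
      Continuous (fun y => μ (Function.update x j y))) →
    Continuous μ := by
  intro n
  induction n with
  | zero =>
    intro μ _ _
    have : μ = fun _ => μ (fun i => i.elim0) := by
      funext x
      congr
      funext i
      exact i.elim0
    rw [this]
    exact continuous_const
  | succ n ih =>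
    intro μ hmono hcont
    set f : (Fin n → Set.Icc (0:ℝ) 1) → Set.Icc (0:ℝ) 1 → ℝ :=
      fun y t => μ (Fin.snoc y t) with hf
    have h1 : ∀ t, Continuous fun y => f y t := by
      intro t
      apply ih
      · intro j y s₁ s₂ hs
        have key : ∀ s, f (Function.update y j s) t =
            μ (Function.update (Fin.snoc y t) j.castSucc s) := by
          intro s
          simp [hf, Fin.snoc_update]
        simp only [key]
        exact hmono j.castSucc (Fin.snoc y t) hs
      · intro j y
        have key : (fun s => f (Function.update y j s) t) =
            fun s => μ (Function.update (Fin.snoc y t) j.castSucc s) := by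
          funext s
          simp [hf, Fin.snoc_update]
        rw [key]
        exact hcont j.castSucc (Fin.snoc y t)
    have h2 : ∀ y, Continuous (f y) := by
      intro y
      have key : f y = fun t => μ (Function.update (Fin.snoc y (0:Set.Icc (0:ℝ) 1))
          (Fin.last n) t) := by
        funext t
        simp [hf, Fin.update_snoc_last]
      rw [key]
      exact hcont (Fin.last n) _
    have h3 : ∀ y, Monotone (f y) := by
      intro y t₁ t₂ ht
      have key : ∀ t, f y t = μ (Function.update (Fin.snoc y (0:Set.Icc (0:ℝ) 1))
          (Fin.last n) t) := by
        intro t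
        simp [hf, Fin.update_snoc_last]
      rw [key t₁, key t₂]
      exact hmono (Fin.last n) _ ht
    have hjoint := aux_key f h1 h2 h3
    have hsplit : Continuous fun x : Fin (n+1) → Set.Icc (0:ℝ) 1 =>
        ((Fin.init x, x (Fin.last n)) : (Fin n → Set.Icc (0:ℝ) 1) × Set.Icc (0:ℝ) 1) :=
      Continuous.prodMk (continuous_pi fun j => continuous_apply _) (continuous_apply _)
    have : μ = (fun p : (Fin n → Set.Icc (0:ℝ) 1) × Set.Icc (0:ℝ) 1 => f p.1 p.2) ∘
        (fun x => (Fin.init x, x (Fin.last n))) := by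
      funext x
      simp [hf, Fin.snoc_init_self]
    rw [this]
    exact hjoint.comp hsplit

/-- A function on `[0,1]^n` that is nondecreasing in each variable separately and
continuous in each variable separately is jointly continuous. -/
theorem stmt_0 (n : ℕ) (μ : (Fin n → Set.Icc (0:ℝ) 1) → ℝ)
    (hmono : ∀ (j : Fin n) (x : Fin n → Set.Icc (0:ℝ) 1),
      Monotone (fun y => μ (Function.update x j y)))
    (hcont : ∀ (j : Fin n) (x : Fin n → Set.Icc (0:ℝ) 1),
      Continuous (fun y => μ (Function.update x j y))) :
    Continuous μ := main_ind n μ hmono hcont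
end

section
/- Let ψ₁, ψ₂ : 𝔻 → 𝔻 be holomorphic self-maps of the unit disk and let σ ∈ ∂𝔻 be a regular contact point of the composition ψ₂ ∘ ψ₁, meaning liminf_{z→σ} (1 − |ψ₂(ψ₁(z))|)/(1 − |z|) < +∞. Then σ is a regular contact point of ψ₁, i.e. liminf_{z→σ} (1 − |ψ₁(z)|)/(1 − |z|) < +∞. -/
open Filter

section
open Metric Complex

lemma sp_aux (f : ℂ → ℂ) (hd : DifferentiableOn ℂ f (ball 0 1))
    (hm : Set.MapsTo f (ball 0 1) (ball 0 1)) (w : ℂ) (hw : w ∈ ball (0:ℂ) 1) :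
    (1 - ‖f 0‖) * (1 - ‖w‖) ≤
      (1 + ‖f 0‖) * (1 - ‖f w‖) := by
  set a := f 0 with ha_def
  have h0 : (0:ℂ) ∈ ball (0:ℂ) 1 := by simp
  have ha : ‖a‖ < 1 := by simpa [Complex.dist_eq] using hm h0
  -- key strict inequality |w' - a| < |1 - conj a * w'| for |w'| < 1
  have key : ∀ z : ℂ, ‖z‖ < 1 → ‖z - a‖ < ‖1 - (starRingEnd ℂ) a * z‖ := by
    intro z hz
    have hz2 : z.re^2 + z.im^2 < 1 := by
      have h := Complex.sq_norm z
      rw [Complex.normSq_apply] at h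
      nlinarith [h, norm_nonneg z]
    have ha2 : a.re^2 + a.im^2 < 1 := by
      have h := Complex.sq_norm a
      rw [Complex.normSq_apply] at h
      nlinarith [h, norm_nonneg a]
    have hsq : (‖z - a‖)^2 < (‖1 - (starRingEnd ℂ) a * z‖)^2 := by
      rw [Complex.sq_norm, Complex.sq_norm]
      simp only [Complex.normSq_apply, Complex.sub_re, Complex.sub_im, Complex.mul_re,
        Complex.mul_im, Complex.conj_re, Complex.conj_im, Complex.one_re, Complex.one_im]
      nlinarith [mul_pos (by nlinarith : (0:ℝ) < 1 - (z.re^2 + z.im^2))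
        (by nlinarith : (0:ℝ) < 1 - (a.re^2 + a.im^2))]
    exact lt_of_pow_lt_pow_left₀ 2 (norm_nonneg _) hsq
  have hden : ∀ z ∈ ball (0:ℂ) 1, (1 - (starRingEnd ℂ) a * f z) ≠ 0 := by
    intro z hz h
    have hfz : ‖f z‖ < 1 := by simpa [Complex.dist_eq] using hm hz
    have h1 : (starRingEnd ℂ) a * f z = 1 := by linear_combination -h
    have h2 : ‖(starRingEnd ℂ) a * f z‖ = 1 := by rw [h1]; simp
    rw [norm_mul, Complex.norm_conj] at h2
    nlinarith [norm_nonneg a, norm_nonneg (f z)]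
  set g : ℂ → ℂ := fun z => (f z - a) / (1 - (starRingEnd ℂ) a * f z) with hg_def
  have gdiff : DifferentiableOn ℂ g (ball 0 1) := by
    apply DifferentiableOn.div
    · exact hd.sub (differentiableOn_const a)
    · exact (differentiableOn_const 1).sub ((differentiableOn_const _).mul hd)
    · exact hden
  have gmaps : Set.MapsTo g (ball 0 1) (ball 0 1) := by
    intro z hz
    have hfz : ‖f z‖ < 1 := by simpa [Complex.dist_eq] using hm hz
    have hk := key (f z) hfz
    have hpos : 0 < ‖1 - (starRingEnd ℂ) a * f z‖ := lt_of_le_of_lt (norm_nonneg _) hk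
    simp only [mem_ball, Complex.dist_eq, sub_zero, hg_def, norm_div]
    rw [div_lt_one hpos]
    exact hk
  have g0 : g 0 = 0 := by simp [hg_def, ha_def]
  have hwabs : ‖w‖ < 1 := by simpa [Complex.dist_eq] using hw
  have hsch : ‖g w‖ ≤ ‖w‖ :=
    Complex.norm_le_norm_of_mapsTo_ball gdiff (gmaps.mono_right ball_subset_closedBall) g0 (by simpa using hwabs)
  -- unpack
  have hfw : ‖f w‖ < 1 := by simpa [Complex.dist_eq] using hm hw
  set u := ‖f w‖ with hu_def
  set t := ‖w‖ with ht_def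
  set α := ‖a‖ with hα_def
  have hdenpos : 0 < ‖1 - (starRingEnd ℂ) a * f w‖ :=
    lt_of_le_of_lt (norm_nonneg _) (key (f w) hfw)
  have hineq : ‖f w - a‖ ≤ t * ‖1 - (starRingEnd ℂ) a * f w‖ := by
    have : ‖f w - a‖ / ‖1 - (starRingEnd ℂ) a * f w‖ ≤ t := by
      simpa [hg_def, norm_div] using hsch
    calc ‖f w - a‖
        = ‖f w - a‖ / ‖1 - (starRingEnd ℂ) a * f w‖
          * ‖1 - (starRingEnd ℂ) a * f w‖ := (div_mul_cancel₀ _ hdenpos.ne').symm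
      _ ≤ t * ‖1 - (starRingEnd ℂ) a * f w‖ :=
          mul_le_mul_of_nonneg_right this hdenpos.le
  set R := ((starRingEnd ℂ) a * f w).re with hR_def
  have e1 : Complex.normSq (f w - a) = u^2 - 2*R + α^2 := by
    rw [Complex.normSq_sub]
    have : (f w * (starRingEnd ℂ) a).re = R := by rw [hR_def, mul_comm]
    rw [this, ← Complex.sq_norm, ← Complex.sq_norm, ← hu_def, ← hα_def]
    ring
  have e2 : Complex.normSq (1 - (starRingEnd ℂ) a * f w) = 1 - 2*R + α^2*u^2 := by
    rw [Complex.normSq_sub]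
    have h1 : ((1:ℂ) * (starRingEnd ℂ) ((starRingEnd ℂ) a * f w)).re = R := by
      rw [one_mul, Complex.conj_re]
    rw [h1, Complex.normSq_one, map_mul, Complex.normSq_conj,
      ← Complex.sq_norm, ← Complex.sq_norm]
    ring
  have hmain : u^2 - 2*R + α^2 ≤ t^2 * (1 - 2*R + α^2*u^2) := by
    have h2 := pow_le_pow_left₀ (norm_nonneg _) hineq 2
    rw [mul_pow, Complex.sq_norm (f w - a), Complex.sq_norm (1 - (starRingEnd ℂ) a * f w), e1, e2] at h2
    linarith
  have hR : R ≤ α * u := by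
    calc R ≤ ‖(starRingEnd ℂ) a * f w‖ := Complex.re_le_norm _
      _ = α * u := by rw [norm_mul, Complex.norm_conj]
  have hu0 : 0 ≤ u := norm_nonneg _
  have ht0 : 0 ≤ t := norm_nonneg _
  have hα0 : 0 ≤ α := norm_nonneg _
  have ht2 : (0:ℝ) ≤ 1 - t^2 := by nlinarith
  have hq : (1-α^2*t^2)*u^2 - 2*α*(1-t^2)*u + (α^2 - t^2) ≤ 0 := by
    nlinarith [mul_le_mul_of_nonneg_right hR ht2, hmain]
  have hA : (1+α*t)*u ≤ α+t := by
    nlinarith [hq, mul_nonneg ht0 (by nlinarith : (0:ℝ) ≤ 1 - α*u)]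
  nlinarith [hA, mul_nonneg (mul_nonneg hα0 (by linarith : (0:ℝ) ≤ 1 - t))
    (by linarith : (0:ℝ) ≤ 1 - u)]
end

/-- If `σ ∈ ∂𝔻` is a regular contact point of the composition `ψ₂ ∘ ψ₁` of two
holomorphic self-maps of the unit disk, i.e. the Julia liminf of `ψ₂ ∘ ψ₁` at `σ` is
finite, then `σ` is a regular contact point of `ψ₁`. -/
theorem stmt_2 (ψ₁ ψ₂ : ℂ → ℂ)
    (h₁ : DifferentiableOn ℂ ψ₁ {z : ℂ | ‖z‖ < 1})
    (h₁m : Set.MapsTo ψ₁ {z : ℂ | ‖z‖ < 1} {z : ℂ | ‖z‖ < 1})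
    (h₂ : DifferentiableOn ℂ ψ₂ {z : ℂ | ‖z‖ < 1})
    (h₂m : Set.MapsTo ψ₂ {z : ℂ | ‖z‖ < 1} {z : ℂ | ‖z‖ < 1})
    (σ : ℂ) (hσ : ‖σ‖ = 1)
    (hreg : Filter.liminf
        (fun z => (((1 - ‖ψ₂ (ψ₁ z)‖) / (1 - ‖z‖) : ℝ) : EReal))
        (nhdsWithin σ {z : ℂ | ‖z‖ < 1}) < ⊤) :
    Filter.liminf
        (fun z => (((1 - ‖ψ₁ z‖) / (1 - ‖z‖) : ℝ) : EReal))
        (nhdsWithin σ {z : ℂ | ‖z‖ < 1}) < ⊤ := by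
  have hS : {z : ℂ | ‖z‖ < 1} = Metric.ball (0:ℂ) 1 := by
    ext z; simp [Complex.dist_eq]
  set α := ‖ψ₂ 0‖ with hα_def
  have h0S : (0:ℂ) ∈ {z : ℂ | ‖z‖ < 1} := by simp
  have hα1 : α < 1 := h₂m h0S
  have hα0 : 0 ≤ α := norm_nonneg _
  set K : ℝ := (1 + α) / (1 - α) with hK_def
  have hK0 : 0 ≤ K := div_nonneg (by linarith) (by linarith)
  -- pointwise estimate
  have hpt : ∀ z ∈ {z : ℂ | ‖z‖ < 1},
      (1 - ‖ψ₁ z‖) / (1 - ‖z‖) ≤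
        K * ((1 - ‖ψ₂ (ψ₁ z)‖) / (1 - ‖z‖)) := by
    intro z hz
    have hz1 : ‖z‖ < 1 := hz
    have hd : (0:ℝ) < 1 - ‖z‖ := by linarith
    have hw : ψ₁ z ∈ Metric.ball (0:ℂ) 1 := by rw [← hS]; exact h₁m hz
    have hSP := sp_aux ψ₂ (hS ▸ h₂) (hS ▸ h₂m) (ψ₁ z) hw
    rw [hK_def, div_mul_div_comm, div_le_div_iff₀ hd (mul_pos (by linarith : (0:ℝ) < 1 - α) hd)]
    nlinarith [mul_le_mul_of_nonneg_right hSP hd.le]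
  obtain ⟨x, hx1, -⟩ := EReal.lt_iff_exists_real_btwn.mp hreg
  have hfreq : ∃ᶠ z in nhdsWithin σ {z : ℂ | ‖z‖ < 1},
      (((1 - ‖ψ₂ (ψ₁ z)‖) / (1 - ‖z‖) : ℝ) : EReal) < (x : EReal) :=
    frequently_lt_of_liminf_lt (by isBoundedDefault) hx1
  have hmem : ∀ᶠ z in nhdsWithin σ {z : ℂ | ‖z‖ < 1},
      z ∈ {z : ℂ | ‖z‖ < 1} := eventually_mem_nhdsWithin
  have hfreq2 : ∃ᶠ z in nhdsWithin σ {z : ℂ | ‖z‖ < 1},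
      (((1 - ‖ψ₁ z‖) / (1 - ‖z‖) : ℝ) : EReal) ≤ ((K * x : ℝ) : EReal) := by
    refine (hfreq.and_eventually hmem).mono ?_
    rintro z ⟨hlt, hzS⟩
    rw [EReal.coe_lt_coe_iff] at hlt
    rw [EReal.coe_le_coe_iff]
    calc (1 - ‖ψ₁ z‖) / (1 - ‖z‖)
        ≤ K * ((1 - ‖ψ₂ (ψ₁ z)‖) / (1 - ‖z‖)) := hpt z hzS
      _ ≤ K * x := mul_le_mul_of_nonneg_left hlt.le hK0
  exact lt_of_le_of_lt (liminf_le_of_frequently_le hfreq2) (EReal.coe_lt_top _)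
end

section
/- Let Φ : ℂ \ [ξ₁, ξ₂] → ℂ (with ξ₁ < ξ₂ real) be given by the Nevanlinna representation Φ(z) = α + β z + ∫_{[ξ₁,ξ₂]} (1 + t z)/(t − z) dν(t), where α ∈ ℝ, β ≥ 0, and ν is a finite positive Borel measure on [ξ₁, ξ₂]. Suppose Φ(x₂) − Φ(x₁) > ξ₂ − ξ₁ for all real x₁ < ξ₁ and x₂ > ξ₂. Then β ≥ 1, and if β = 1 then ν([ξ₁, ξ₂]) = 0. -/
open MeasureTheory

lemma stmt4_arith (D M β : ℝ) (hDpos : 0 < D) (hMnn : 0 ≤ M)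
    (key : ∀ ε : ℝ, 0 < ε →
      D < (D + 2*ε) * β - (D + 2*ε) / (D + ε)^2 * M) :
    1 ≤ β ∧ (β = 1 → M ≤ 0) := by
  have hβ1 : 1 ≤ β := by
    by_contra h
    push_neg at h
    have hβnn : 0 ≤ β := by
      by_contra hb; push_neg at hb
      have h1 := key 1 one_pos
      have hpos : 0 ≤ (D + 2*1) / (D + 1)^2 * M := by positivity
      nlinarith
    set ε := D*(1-β)/(2*(β+1)) with hε
    have hεpos : 0 < ε := div_pos (by nlinarith) (by nlinarith)
    have h1 := key ε hεpos
    have hpos : 0 ≤ (D + 2*ε) / (D + ε)^2 * M := by positivity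
    have h2 : D < (D + 2*ε) * β := by linarith
    have hεval : ε * (2*(β+1)) = D*(1-β) := by
      rw [hε]; field_simp
    nlinarith
  refine ⟨hβ1, fun hb1 => ?_⟩
  by_contra hne
  push_neg at hne
  set ε := min D (M/(16*D)) with hε
  have hεpos : 0 < ε := lt_min hDpos (by positivity)
  have hεD : ε ≤ D := min_le_left _ _
  have hεM : ε ≤ M/(16*D) := min_le_right _ _
  have h1 := key ε hεpos
  rw [hb1] at h1
  have h2 : (D + 2*ε) / (D + ε)^2 * M < 2*ε := by linarith
  rw [div_mul_eq_mul_div, div_lt_iff₀ (by positivity)] at h2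
  have h3 : ε * (16*D) ≤ M := by
    rw [← le_div_iff₀ (by positivity)]; exact hεM
  nlinarith [mul_le_mul_of_nonneg_right h3 hDpos.le,
    mul_le_mul_of_nonneg_left (mul_le_mul hεD hεD hεpos.le hDpos.le) hεpos.le,
    mul_le_mul_of_nonneg_left hεD hεpos.le,
    mul_pos (mul_pos hεpos hDpos) hDpos]

lemma stmt4_calc (t x₁ x₂ : ℝ) (h1 : 0 < t - x₁) (h2 : t - x₂ < 0) :
    (1 + t * x₂) / (t - x₂) - (1 + t * x₁) / (t - x₁)
      = -(((x₂ - x₁) * (1 + t^2)) / ((x₂ - t) * (t - x₁))) := by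
  have h2' : t - x₂ ≠ 0 := ne_of_lt h2
  have h1' : t - x₁ ≠ 0 := ne_of_gt h1
  have h3 : x₂ - t ≠ 0 := by intro h; apply h2'; linarith [sub_eq_zero.mp h]
  field_simp
  ring

/-- Nevanlinna representation with measure supported on `[ξ₁, ξ₂]`: if
`Φ(x₂) − Φ(x₁) > ξ₂ − ξ₁` for all `x₁ < ξ₁ < ξ₂ < x₂`, then `β ≥ 1`, with `β = 1`
forcing `ν([ξ₁,ξ₂]) = 0`. -/
theorem stmt_4 (ξ₁ ξ₂ α β : ℝ) (hξ : ξ₁ < ξ₂) (hβ : 0 ≤ β)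
    (ν : Measure ℝ) [IsFiniteMeasure ν]
    (Φ : ℝ → ℝ)
    (hΦ : ∀ x : ℝ, x ∉ Set.Icc ξ₁ ξ₂ →
      Φ x = α + β * x + ∫ t in Set.Icc ξ₁ ξ₂, (1 + t * x) / (t - x) ∂ν)
    (hgt : ∀ x₁ x₂ : ℝ, x₁ < ξ₁ → ξ₂ < x₂ → ξ₂ - ξ₁ < Φ x₂ - Φ x₁) :
    1 ≤ β ∧ (β = 1 → ν (Set.Icc ξ₁ ξ₂) = 0) := by
  have hkey : ∀ ε : ℝ, 0 < ε →
      ξ₂ - ξ₁ < (ξ₂ - ξ₁ + 2*ε) * β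
        - (ξ₂ - ξ₁ + 2*ε) / (ξ₂ - ξ₁ + ε)^2 * (ν (Set.Icc ξ₁ ξ₂)).toReal := by
    intro ε hε
    have hx₁lt : ξ₁ - ε < ξ₁ := by linarith
    have hx₂gt : ξ₂ < ξ₂ + ε := by linarith
    have hx₁out : ξ₁ - ε ∉ Set.Icc ξ₁ ξ₂ := by
      simp only [Set.mem_Icc, not_and_or, not_le]; left; linarith
    have hx₂out : ξ₂ + ε ∉ Set.Icc ξ₁ ξ₂ := by
      simp only [Set.mem_Icc, not_and_or, not_le]; right; linarith
    have hint : ∀ x : ℝ, x ∉ Set.Icc ξ₁ ξ₂ →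
        IntegrableOn (fun t => (1 + t * x) / (t - x)) (Set.Icc ξ₁ ξ₂) ν := by
      intro x hx
      apply ContinuousOn.integrableOn_compact isCompact_Icc
      apply ContinuousOn.div
      · fun_prop
      · fun_prop
      · intro t ht h
        exact hx (by rw [show x = t by linarith [sub_eq_zero.mp h]]; exact ht)
    have hi₁ := hint (ξ₁ - ε) hx₁out
    have hi₂ := hint (ξ₂ + ε) hx₂out
    have hdiff : Φ (ξ₂ + ε) - Φ (ξ₁ - ε) = β * (ξ₂ - ξ₁ + 2*ε) +
        ∫ t in Set.Icc ξ₁ ξ₂,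
          ((1 + t * (ξ₂ + ε)) / (t - (ξ₂ + ε)) - (1 + t * (ξ₁ - ε)) / (t - (ξ₁ - ε))) ∂ν := by
      rw [hΦ _ hx₂out, hΦ _ hx₁out, integral_sub hi₂ hi₁]
      ring
    have hpt : ∀ t ∈ Set.Icc ξ₁ ξ₂,
        (1 + t * (ξ₂ + ε)) / (t - (ξ₂ + ε)) - (1 + t * (ξ₁ - ε)) / (t - (ξ₁ - ε)) ≤
          -((ξ₂ - ξ₁ + 2*ε) / (ξ₂ - ξ₁ + ε)^2) := by
      intro t ht
      obtain ⟨ht1, ht2⟩ := ht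
      have hd2 : t - (ξ₂ + ε) < 0 := by linarith
      have hd1 : 0 < t - (ξ₁ - ε) := by linarith
      rw [stmt4_calc t (ξ₁ - ε) (ξ₂ + ε) hd1 hd2, neg_le_neg_iff]
      have hsub : (ξ₂ + ε) - (ξ₁ - ε) = ξ₂ - ξ₁ + 2*ε := by ring
      rw [hsub]
      apply div_le_div₀ (by nlinarith) (by nlinarith) (by nlinarith) (by nlinarith)
    have hconst : IntegrableOn
        (fun _ : ℝ => -((ξ₂ - ξ₁ + 2*ε) / (ξ₂ - ξ₁ + ε)^2)) (Set.Icc ξ₁ ξ₂) ν :=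
      integrableOn_const (measure_ne_top _ _)
    have hmono : ∫ t in Set.Icc ξ₁ ξ₂,
          ((1 + t * (ξ₂ + ε)) / (t - (ξ₂ + ε)) - (1 + t * (ξ₁ - ε)) / (t - (ξ₁ - ε))) ∂ν
        ≤ ∫ _ in Set.Icc ξ₁ ξ₂, -((ξ₂ - ξ₁ + 2*ε) / (ξ₂ - ξ₁ + ε)^2) ∂ν :=
      setIntegral_mono_on (hi₂.sub hi₁) hconst measurableSet_Icc hpt
    rw [setIntegral_const, smul_eq_mul, measureReal_def] at hmono
    have hthis := hgt (ξ₁ - ε) (ξ₂ + ε) hx₁lt hx₂gt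
    rw [hdiff] at hthis
    nlinarith [hthis, hmono]
  have hD : 0 < ξ₂ - ξ₁ := by linarith
  obtain ⟨h1, h2⟩ := stmt4_arith (ξ₂ - ξ₁) ((ν (Set.Icc ξ₁ ξ₂)).toReal) β hD
    ENNReal.toReal_nonneg hkey
  refine ⟨h1, fun hb => ?_⟩
  by_contra hne
  have : 0 < (ν (Set.Icc ξ₁ ξ₂)).toReal := ENNReal.toReal_pos hne (measure_ne_top ν _)
  linarith [h2 hb]
end

section
/- Let Φ(z) = α + β z + ∫_{ℝ \ (ξ₁,ξ₂)} (1 + t z)/(t − z) dν(t), where ξ₁ < ξ₂ are real, α ∈ ℝ, β ≥ 0, and ν is a finite positive Borel measure on ℝ \ (ξ₁, ξ₂), with the integral converging for z ∈ (ξ₁, ξ₂). Suppose Φ(x₂) − Φ(x₁) < ξ₂ − ξ₁ whenever ξ₁ < x₁ < x₂ < ξ₂. Then β ≤ 1, and β = 1 implies ν(ℝ \ (ξ₁, ξ₂)) = 0. -/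
open MeasureTheory

set_option maxHeartbeats 1000000 in
/-- Nevanlinna representation with measure supported on `ℝ \ (ξ₁, ξ₂)`: if
`Φ(x₂) − Φ(x₁) < ξ₂ − ξ₁` whenever `ξ₁ < x₁ < x₂ < ξ₂`, then `β ≤ 1`, with `β = 1`
forcing `ν(ℝ \ (ξ₁,ξ₂)) = 0`. -/
theorem stmt_5 (ξ₁ ξ₂ α β : ℝ) (hξ : ξ₁ < ξ₂) (hβ : 0 ≤ β)
    (ν : Measure ℝ) [IsFiniteMeasure ν]
    (hint : ∀ x ∈ Set.Ioo ξ₁ ξ₂,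
      IntegrableOn (fun t : ℝ => (1 + t * x) / (t - x)) (Set.Ioo ξ₁ ξ₂)ᶜ ν)
    (Φ : ℝ → ℝ)
    (hΦ : ∀ x ∈ Set.Ioo ξ₁ ξ₂,
      Φ x = α + β * x + ∫ t in (Set.Ioo ξ₁ ξ₂)ᶜ, (1 + t * x) / (t - x) ∂ν)
    (hlt : ∀ x₁ x₂ : ℝ, ξ₁ < x₁ → x₁ < x₂ → x₂ < ξ₂ → Φ x₂ - Φ x₁ < ξ₂ - ξ₁) :
    β ≤ 1 ∧ (β = 1 → ν (Set.Ioo ξ₁ ξ₂)ᶜ = 0) := by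
  set M : ℝ := max 1 (max |ξ₁| |ξ₂|) with hMdef
  have hM1 : (1 : ℝ) ≤ M := le_max_left _ _
  have hMξ₁ : |ξ₁| ≤ M := le_trans (le_max_left _ _) (le_max_right _ _)
  have hMξ₂ : |ξ₂| ≤ M := le_trans (le_max_right _ _) (le_max_right _ _)
  have hM0 : (0 : ℝ) < M := lt_of_lt_of_le one_pos hM1
  have hM2 : (0 : ℝ) < 2 * M ^ 2 := by positivity
  have hM2' : (1 : ℝ) ≤ M ^ 2 := by nlinarith
  set νR : ℝ := (ν (Set.Ioo ξ₁ ξ₂)ᶜ).toReal with hνRdef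
  have hνR0 : 0 ≤ νR := ENNReal.toReal_nonneg
  have key : ∀ x₁ x₂ : ℝ, ξ₁ < x₁ → x₁ < x₂ → x₂ < ξ₂ →
      (β + νR / (2 * M ^ 2)) * (x₂ - x₁) < ξ₂ - ξ₁ := by
    intro x₁ x₂ h1 h12 h2
    have hx₁ : x₁ ∈ Set.Ioo ξ₁ ξ₂ := ⟨h1, h12.trans h2⟩
    have hx₂ : x₂ ∈ Set.Ioo ξ₁ ξ₂ := ⟨h1.trans h12, h2⟩
    have hi₁ := hint x₁ hx₁
    have hi₂ := hint x₂ hx₂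
    have hb1 : |x₁| ≤ M := by
      rw [abs_le]; rw [abs_le] at hMξ₁ hMξ₂
      constructor <;> nlinarith [hx₁.1, hx₁.2]
    have hb2 : |x₂| ≤ M := by
      rw [abs_le]; rw [abs_le] at hMξ₁ hMξ₂
      constructor <;> nlinarith [hx₂.1, hx₂.2]
    have hxx : x₁ * x₂ ≤ M ^ 2 := by
      calc x₁ * x₂ ≤ |x₁ * x₂| := le_abs_self _
        _ = |x₁| * |x₂| := abs_mul _ _
        _ ≤ M * M := mul_le_mul hb1 hb2 (abs_nonneg _) hM0.le
        _ = M ^ 2 := (sq M).symm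
    rw [abs_le] at hb1 hb2
    have hpt : ∀ t ∈ (Set.Ioo ξ₁ ξ₂)ᶜ,
        (x₂ - x₁) / (2 * M ^ 2) ≤ (1 + t * x₂) / (t - x₂) - (1 + t * x₁) / (t - x₁) := by
      intro t ht
      simp only [Set.mem_compl_iff, Set.mem_Ioo, not_and, not_lt] at ht
      have hP : 0 < (t - x₁) * (t - x₂) := by
        rcases le_or_gt t ξ₁ with h | h
        · have h1' : t - x₁ < 0 := by linarith [hx₁.1]
          have h2' : t - x₂ < 0 := by linarith [hx₂.1]
          nlinarith
        · have h' := ht h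
          have h1' : 0 < t - x₁ := by linarith [hx₁.2]
          have h2' : 0 < t - x₂ := by linarith [hx₂.2]
          nlinarith
      have ht₁ : t - x₁ ≠ 0 := by intro h; rw [h] at hP; simp at hP
      have ht₂ : t - x₂ ≠ 0 := by intro h; rw [h] at hP; simp at hP
      have heq : (1 + t * x₂) / (t - x₂) - (1 + t * x₁) / (t - x₁)
          = (x₂ - x₁) * (1 + t ^ 2) / ((t - x₁) * (t - x₂)) := by
        field_simp
        ring
      have hub : (t - x₁) * (t - x₂) ≤ 2 * M ^ 2 * (1 + t ^ 2) := by
        rcases le_total 0 t with htp | htn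
        · have e1 : 0 ≤ t * (M + x₁) := mul_nonneg htp (by linarith)
          have e2 : 0 ≤ t * (M + x₂) := mul_nonneg htp (by linarith)
          nlinarith [sq_nonneg (M * t - 1), sq_nonneg t, hM2', hxx]
        · have e1 : 0 ≤ (-t) * (M - x₁) := mul_nonneg (by linarith) (by linarith)
          have e2 : 0 ≤ (-t) * (M - x₂) := mul_nonneg (by linarith) (by linarith)
          nlinarith [sq_nonneg (M * t + 1), sq_nonneg t, hM2', hxx]
      have hd : 0 ≤ x₂ - x₁ := by linarith
      rw [heq, div_le_div_iff₀ hM2 hP]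
      calc (x₂ - x₁) * ((t - x₁) * (t - x₂))
          ≤ (x₂ - x₁) * (2 * M ^ 2 * (1 + t ^ 2)) := mul_le_mul_of_nonneg_left hub hd
        _ = (x₂ - x₁) * (1 + t ^ 2) * (2 * M ^ 2) := by ring
    have hmeas : MeasurableSet (Set.Ioo ξ₁ ξ₂)ᶜ := measurableSet_Ioo.compl
    have hsub : IntegrableOn
        (fun t : ℝ => (1 + t * x₂) / (t - x₂) - (1 + t * x₁) / (t - x₁))
        (Set.Ioo ξ₁ ξ₂)ᶜ ν := hi₂.sub hi₁
    have hineq : (x₂ - x₁) / (2 * M ^ 2) * νR ≤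
        (∫ t in (Set.Ioo ξ₁ ξ₂)ᶜ, (1 + t * x₂) / (t - x₂) ∂ν) -
        (∫ t in (Set.Ioo ξ₁ ξ₂)ᶜ, (1 + t * x₁) / (t - x₁) ∂ν) := by
      rw [← integral_sub hi₂ hi₁]
      exact setIntegral_ge_of_const_le_real hmeas (measure_ne_top ν _) hpt hsub
    have h := hlt x₁ x₂ h1 h12 h2
    rw [hΦ x₂ hx₂, hΦ x₁ hx₁] at h
    have e1 : (β + νR / (2 * M ^ 2)) * (x₂ - x₁)
        = β * x₂ - β * x₁ + (x₂ - x₁) / (2 * M ^ 2) * νR := by ring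
    rw [e1]
    linarith [hineq, h]
  have hK : β + νR / (2 * M ^ 2) ≤ 1 := by
    by_contra hco
    push_neg at hco
    set K : ℝ := β + νR / (2 * M ^ 2) with hKdef
    set L : ℝ := ξ₂ - ξ₁ with hLdef
    have hL : 0 < L := by rw [hLdef]; linarith
    have hK0 : 0 < K := by linarith
    set δ : ℝ := L * (K - 1) / (4 * K) with hδdef
    have hδ0 : 0 < δ := by
      apply div_pos
      · nlinarith
      · linarith
    have hδval : 4 * K * δ = L * (K - 1) := by
      rw [hδdef]; field_simp
    have hδL : 2 * δ < L := by nlinarith [hδval, hK0, hL, hco]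
    have h := key (ξ₁ + δ) (ξ₂ - δ) (by linarith) (by linarith [hδL, hLdef]) (by linarith)
    have hrw : ξ₂ - δ - (ξ₁ + δ) = L - 2 * δ := by rw [hLdef]; ring
    rw [hrw] at h
    nlinarith [h, hδval, hL, hco, mul_pos hL (by linarith : (0:ℝ) < K - 1)]
  have hν2 : 0 ≤ νR / (2 * M ^ 2) := by positivity
  refine ⟨by linarith, ?_⟩
  intro hβ1
  have hle : νR / (2 * M ^ 2) ≤ 0 := by linarith
  have hνR : νR = 0 := by
    by_contra hne
    have hpos : 0 < νR := lt_of_le_of_ne hνR0 (Ne.symm hne)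
    have : 0 < νR / (2 * M ^ 2) := div_pos hpos hM2
    linarith
  have hfin := measure_ne_top ν (Set.Ioo ξ₁ ξ₂)ᶜ
  rw [hνRdef] at hνR
  exact ((ENNReal.toReal_eq_zero_iff _).mp hνR).resolve_right hfin
end

section
/- Let a, b : [0,∞) → (0,∞) satisfy: (i) b(t)/b(s) ≤ 1 and (a(t)/a(s))·(b(t)/b(s)) ≥ 1 for all 0 ≤ s ≤ t; (ii) a is locally absolutely continuous. Then b is locally absolutely continuous on [0,∞). -/
/-- `f` is absolutely continuous on the interval `[A, B]`. -/
def AbsolutelyContinuousOnIcc (f : ℝ → ℝ) (A B : ℝ) : Prop :=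
  ∀ ε > (0:ℝ), ∃ δ > (0:ℝ), ∀ (k : ℕ) (a b : Fin k → ℝ),
    (∀ i, a i ∈ Set.Icc A B ∧ b i ∈ Set.Icc A B ∧ a i ≤ b i) →
    (Pairwise fun i j => Disjoint (Set.Ioo (a i) (b i)) (Set.Ioo (a j) (b j))) →
    (∑ i, (b i - a i)) < δ → (∑ i, |f (b i) - f (a i)|) < ε

/-- `f` is locally absolutely continuous on `[0, ∞)`. -/
def LocAC (f : ℝ → ℝ) : Prop := ∀ T > (0:ℝ), AbsolutelyContinuousOnIcc f 0 T

/-- If positive functions `a, b` on `[0,∞)` satisfy `b(t)/b(s) ≤ 1` and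
`(a(t)/a(s))·(b(t)/b(s)) ≥ 1` for all `0 ≤ s ≤ t`, and `a` is locally absolutely
continuous, then `b` is locally absolutely continuous. -/
theorem stmt_9 (a b : ℝ → ℝ)
    (ha : ∀ t : ℝ, 0 ≤ t → 0 < a t) (hb : ∀ t : ℝ, 0 ≤ t → 0 < b t)
    (h1 : ∀ s t : ℝ, 0 ≤ s → s ≤ t →
      b t / b s ≤ 1 ∧ 1 ≤ (a t / a s) * (b t / b s))
    (h2 : LocAC a) :
    LocAC b := by
  have ha0 := ha 0 le_rfl
  have hb0 := hb 0 le_rfl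
  set C : ℝ := b 0 / a 0 with hC
  have hCpos : 0 < C := div_pos hb0 ha0
  -- basic monotonicity facts
  have mono : ∀ s t : ℝ, 0 ≤ s → s ≤ t →
      a s ≤ a t ∧ b t ≤ b s ∧ a s * b s ≤ a t * b t := by
    intro s t hs hst
    have ht : 0 ≤ t := hs.trans hst
    have hbs := hb s hs
    have hbt := hb t ht
    have has := ha s hs
    have hat := ha t ht
    obtain ⟨H1, H2⟩ := h1 s t hs hst
    have hbts : b t ≤ b s := (div_le_one hbs).mp H1
    have hmul : a s * b s ≤ a t * b t := by
      rw [div_mul_div_comm, one_le_div (mul_pos has hbs)] at H2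
      exact H2
    refine ⟨?_, hbts, hmul⟩
    nlinarith [mul_le_mul_of_nonneg_left hbts hat.le]
  -- the key Lipschitz-type bound
  have key : ∀ s t : ℝ, 0 ≤ s → s ≤ t → |b t - b s| ≤ C * |a t - a s| := by
    intro s t hs hst
    have ht : 0 ≤ t := hs.trans hst
    obtain ⟨hast, hbts, hmul⟩ := mono s t hs hst
    obtain ⟨ha0s, hb0s, -⟩ := mono 0 s le_rfl hs
    obtain ⟨ha0t, -, -⟩ := mono 0 t le_rfl ht
    rw [abs_of_nonpos (by linarith), abs_of_nonneg (by linarith)]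
    rw [hC, div_mul_eq_mul_div, le_div_iff₀ ha0]
    nlinarith [mul_nonneg (sub_nonneg.mpr hbts) (sub_nonneg.mpr ha0t),
      mul_nonneg (sub_nonneg.mpr hb0s) (sub_nonneg.mpr hast)]
  intro T hT ε hε
  obtain ⟨δ, hδ, hAC⟩ := h2 T hT (ε / C) (div_pos hε hCpos)
  refine ⟨δ, hδ, fun k aa bb hmem hdisj hsum => ?_⟩
  have hbound : ∀ i, |b (bb i) - b (aa i)| ≤ C * |a (bb i) - a (aa i)| := by
    intro i
    obtain ⟨hai, hbi, hab⟩ := hmem i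
    exact key (aa i) (bb i) hai.1 hab
  calc ∑ i, |b (bb i) - b (aa i)|
      ≤ ∑ i, C * |a (bb i) - a (aa i)| := Finset.sum_le_sum fun i _ => hbound i
    _ = C * ∑ i, |a (bb i) - a (aa i)| := by rw [Finset.mul_sum]
    _ < C * (ε / C) := by
        exact mul_lt_mul_of_pos_left (hAC k aa bb hmem hdisj hsum) hCpos
    _ = ε := by field_simp
end

section
/- Let φ ∈ Hol(𝔻,𝔻) and suppose there exist A > 0 and points σ, ω ∈ ∂𝔻 such that |ω − φ(z)|²/(1 − |φ(z)|²) ≤ A·|σ − z|²/(1 − |z|²) for all z ∈ 𝔻. Then liminf_{z→σ} (1 − |φ(z)|)/(1 − |z|) ≤ A; in particular this liminf is finite. -/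
open Filter

/-- Julia's inequality with constant `A` at `σ` implies the boundary dilation
coefficient `liminf_{z→σ}(1−|φ(z)|)/(1−|z|)` is at most `A`; in particular it is
finite. -/
theorem stmt_12 (φ : ℂ → ℂ)
    (hφ : DifferentiableOn ℂ φ {z : ℂ | ‖z‖ < 1})
    (hmap : Set.MapsTo φ {z : ℂ | ‖z‖ < 1} {z : ℂ | ‖z‖ < 1})
    (A : ℝ) (hA : 0 < A) (σ ω : ℂ) (hσ : ‖σ‖ = 1) (hω : ‖ω‖ = 1)
    (hJulia : ∀ z : ℂ, ‖z‖ < 1 →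
      (‖ω - φ z‖)^2 / (1 - (‖φ z‖)^2) ≤
        A * ((‖σ - z‖)^2 / (1 - (‖z‖)^2))) :
    Filter.liminf
        (fun z => (((1 - ‖φ z‖) / (1 - ‖z‖) : ℝ) : EReal))
        (nhdsWithin σ {z : ℂ | ‖z‖ < 1}) ≤ (A : EReal) := by
  set D := {z : ℂ | ‖z‖ < 1} with hD
  set L := nhdsWithin (1 : ℝ) (Set.Ioo 0 1) with hLdef
  haveI hLne : L.NeBot := right_nhdsWithin_Ioo_neBot (by norm_num)
  set e : ℝ → ℂ := fun r => (r : ℂ) * σ with he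
  set m : ℝ → ℝ := fun r => ‖φ (e r)‖ with hmdef
  -- basic facts for r ∈ (0,1)
  have habs : ∀ r ∈ Set.Ioo (0 : ℝ) 1, ‖e r‖ = r := by
    intro r hr
    rw [he]
    simp [norm_mul, hσ, abs_of_pos hr.1]
  have hmem : ∀ r ∈ Set.Ioo (0 : ℝ) 1, e r ∈ D := by
    intro r hr
    simp only [hD, Set.mem_setOf_eq, habs r hr]
    exact hr.2
  have hmlt : ∀ r ∈ Set.Ioo (0 : ℝ) 1, m r < 1 := fun r hr => hmap (hmem r hr)
  have hm0 : ∀ r, 0 ≤ m r := fun r => norm_nonneg _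
  -- the cross-multiplied Julia inequality along the radius
  have hcross : ∀ r ∈ Set.Ioo (0 : ℝ) 1,
      (1 - m r) * (1 + r) ≤ A * (1 + m r) * (1 - r) := by
    intro r hr
    obtain ⟨hr0, hr1⟩ := hr
    have hm1 : m r < 1 := hmlt r ⟨hr0, hr1⟩
    have hmn : 0 ≤ m r := hm0 r
    have hJ := hJulia (e r) (by rw [habs r ⟨hr0, hr1⟩]; exact hr1)
    rw [habs r ⟨hr0, hr1⟩] at hJ
    have hσz : ‖σ - e r‖ = 1 - r := by
      have h1 : σ - e r = ((1 : ℝ) - r : ℝ) * σ := by rw [he]; push_cast; ring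
      rw [h1, norm_mul, Complex.norm_real, Real.norm_eq_abs, hσ, mul_one, abs_of_pos (by linarith)]
    rw [hσz] at hJ
    set B := ‖ω - φ (e r)‖ with hB
    have hωm : 1 - m r ≤ B := by
      have := norm_sub_norm_le ω (φ (e r))
      simpa [hB, hmdef, hω] using this
    have h1m2 : (0 : ℝ) < 1 - (m r) ^ 2 := by nlinarith
    have h1r2 : (0 : ℝ) < 1 - r ^ 2 := by nlinarith
    have hBsq : (1 - m r) ^ 2 ≤ B ^ 2 := by nlinarith
    have hstep : (1 - m r) ^ 2 / (1 - (m r) ^ 2) ≤ A * ((1 - r) ^ 2 / (1 - r ^ 2)) := by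
      refine le_trans ?_ hJ
      gcongr
    -- clear denominators
    have hstep' : (1 - m r) ^ 2 * (1 - r ^ 2) ≤ A * (1 - r) ^ 2 * (1 - (m r) ^ 2) := by
      rw [mul_div_assoc'] at hstep
      exact (div_le_div_iff₀ h1m2 h1r2).mp hstep
    have hpos : (0 : ℝ) < (1 - m r) * (1 - r) := by nlinarith
    nlinarith [hstep', hpos, sq_nonneg (1 - m r), sq_nonneg (1 - r)]
  -- consequently m r → 1 as r → 1⁻
  have hmlow : ∀ r ∈ Set.Ioo (0 : ℝ) 1, 1 - 2 * A * (1 - r) ≤ m r := by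
    intro r hr
    have h := hcross r hr
    have hm1 : m r < 1 := hmlt r hr
    nlinarith [hr.1, hr.2, hm0 r, hA]
  have hm_tendsto : Tendsto m L (nhds 1) := by
    have hlow : Tendsto (fun r : ℝ => 1 - 2 * A * (1 - r)) L (nhds 1) := by
      have : Tendsto (fun r : ℝ => 1 - 2 * A * (1 - r)) (nhds 1) (nhds (1 - 2 * A * (1 - 1))) :=
        ((continuous_const.sub (continuous_const.mul
          (continuous_const.sub continuous_id))).tendsto 1)
      simpa using this.mono_left nhdsWithin_le_nhds
    refine tendsto_of_tendsto_of_tendsto_of_le_of_le' hlow tendsto_const_nhds ?_ ?_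
    · exact eventually_nhdsWithin_of_forall hmlow
    · exact eventually_nhdsWithin_of_forall fun r hr => (hmlt r hr).le
  -- the comparison function tends to A
  have hg : Tendsto (fun r => ((A * (1 + m r) / (1 + r) : ℝ) : EReal)) L (nhds (A : EReal)) := by
    rw [EReal.tendsto_coe]
    have hnum : Tendsto (fun r => A * (1 + m r)) L (nhds (A * (1 + 1))) :=
      (tendsto_const_nhds.add hm_tendsto).const_mul A
    have hden : Tendsto (fun r : ℝ => 1 + r) L (nhds (1 + 1)) :=
      (tendsto_const_nhds.add tendsto_id).mono_left nhdsWithin_le_nhds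
    have h := hnum.div hden (by norm_num)
    have heq : A * (1 + 1) / (1 + 1) = A := by ring
    rwa [heq] at h
  -- the radial path converges to σ within D
  have hmapsto : Tendsto e (L : Filter ℝ) (nhdsWithin σ D) := by
    apply tendsto_nhdsWithin_of_tendsto_nhds_of_eventually_within
    · have h : Tendsto e (nhds 1) (nhds (((1 : ℝ) : ℂ) * σ)) :=
        ((Complex.continuous_ofReal.mul continuous_const).tendsto 1)
      simpa using h.mono_left nhdsWithin_le_nhds
    · exact eventually_nhdsWithin_of_forall hmem
  -- eventual comparison along the radius, in EReal
  set f : ℂ → EReal := fun z => (((1 - ‖φ z‖) / (1 - ‖z‖) : ℝ) : EReal)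
    with hfdef
  have hev : ∀ᶠ r in L, (f ∘ e) r ≤ ((A * (1 + m r) / (1 + r) : ℝ) : EReal) := by
    refine eventually_nhdsWithin_of_forall fun r hr => ?_
    have h1 : (1 - m r) / (1 - r) ≤ A * (1 + m r) / (1 + r) := by
      have h := hcross r hr
      rw [div_le_div_iff₀ (by linarith [hr.2] : (0:ℝ) < 1 - r) (by linarith [hr.1] : (0:ℝ) < 1 + r)]
      linarith [h]
    have : (f ∘ e) r = (((1 - m r) / (1 - r) : ℝ) : EReal) := by
      simp [hfdef, Function.comp, habs r hr, hmdef]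
    rw [this]
    exact EReal.coe_le_coe_iff.mpr h1
  calc liminf f (nhdsWithin σ D)
      ≤ liminf f (map e L) := liminf_le_liminf_of_le hmapsto
    _ = liminf (f ∘ e) L := (liminf_comp f e L).symm
    _ ≤ liminf (fun r => ((A * (1 + m r) / (1 + r) : ℝ) : EReal)) L := liminf_le_liminf hev
    _ = (A : EReal) := hg.liminf_eq
end
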